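/- Let V be a real n×p matrix of full column rank with 1 ≤ p ≤ n, let C be a real n×n matrix, and let B₀, B₁ be symmetric real n×n matrices satisfying the first two master equations VVᵀB₀ = 0 and VVᵀB₁ + CB₀ = I. Then VᵀB₀ = 0, B₀VVᵀ = 0, VVᵀB₁VVᵀ = VVᵀ, and VᵀB₁V = I_p. -/
import Mathlib


open Matrix

/-- A square matrix over ℝ with full rank is a unit. -/
lemma isUnit_of_rank_eq_card {p : ℕ} (M : Matrix (Fin p) (Fin p) ℝ)
    (h : M.rank = p) : IsUnit M := by
  rw [← Matrix.mulVec_injective_iff_isUnit]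
  have hrange : LinearMap.range M.mulVecLin = ⊤ := by
    apply Submodule.eq_top_of_finrank_eq
    rw [← Matrix.rank, h]
    simp [Module.finrank_pi]
  have hsurj : Function.Surjective M.mulVecLin :=
    LinearMap.range_eq_top.mp hrange
  have hinj : Function.Injective M.mulVecLin :=
    (LinearMap.injective_iff_surjective (f := M.mulVecLin)).mpr hsurj
  exact hinj

/-- **Consequences of the first two master equations.**
Let `V ∈ ℝ^{n×p}` have full column rank (`1 ≤ p ≤ n`), `C ∈ ℝ^{n×n}`, and let
`B₀, B₁` be symmetric matrices with `VVᵀB₀ = 0` and `VVᵀB₁ + CB₀ = I`. Then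
`VᵀB₀ = 0`, `B₀VVᵀ = 0`, `VVᵀB₁VVᵀ = VVᵀ`, and `VᵀB₁V = I_p`. -/
theorem master_equation_consequences
    (n p : ℕ) (hp : 1 ≤ p) (hpn : p ≤ n)
    (V : Matrix (Fin n) (Fin p) ℝ) (hV : V.rank = p)
    (C B0 B1 : Matrix (Fin n) (Fin n) ℝ)
    (hB0 : B0.IsSymm) (hB1 : B1.IsSymm)
    (h0 : V * Vᵀ * B0 = 0) (h1 : V * Vᵀ * B1 + C * B0 = 1) :
    Vᵀ * B0 = 0 ∧
    B0 * (V * Vᵀ) = 0 ∧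
    V * Vᵀ * B1 * (V * Vᵀ) = V * Vᵀ ∧
    Vᵀ * B1 * V = 1 := by
  -- VᵀV is invertible
  have hrk : (Vᵀ * V).rank = p := by
    rw [Matrix.rank_transpose_mul_self, hV]
  have hU : IsUnit (Vᵀ * V) := isUnit_of_rank_eq_card _ hrk
  have hd : IsUnit (Vᵀ * V).det := (Matrix.isUnit_iff_isUnit_det _).mp hU
  set W := (Vᵀ * V)⁻¹ with hWdef
  have hW : W * (Vᵀ * V) = 1 := Matrix.nonsing_inv_mul _ hd
  have hW' : (Vᵀ * V) * W = 1 := Matrix.mul_nonsing_inv _ hd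
  -- 1. VᵀB₀ = 0
  have e1 : Vᵀ * B0 = 0 := by
    have : Vᵀ * (V * Vᵀ * B0) = 0 := by rw [h0, Matrix.mul_zero]
    calc Vᵀ * B0 = W * (Vᵀ * V) * (Vᵀ * B0) := by rw [hW, Matrix.one_mul]
    _ = W * (Vᵀ * (V * Vᵀ * B0)) := by simp only [Matrix.mul_assoc]
    _ = 0 := by rw [this, Matrix.mul_zero]
  -- 2. B₀VVᵀ = 0
  have e2 : B0 * (V * Vᵀ) = 0 := by
    have h := congrArg Matrix.transpose h0
    rw [Matrix.transpose_mul, Matrix.transpose_mul, hB0.eq, Matrix.transpose_transpose,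
      Matrix.transpose_zero] at h
    rw [← Matrix.mul_assoc] at h
    rw [← Matrix.mul_assoc]
    exact h
  -- 3. VVᵀB₁VVᵀ = VVᵀ
  have e3 : V * Vᵀ * B1 * (V * Vᵀ) = V * Vᵀ := by
    have := congrArg (· * (V * Vᵀ)) h1
    simp only [Matrix.add_mul, Matrix.one_mul] at this
    rw [Matrix.mul_assoc C B0 (V * Vᵀ), e2, Matrix.mul_zero, add_zero] at this
    exact this
  -- 4. VᵀB₁V = 1
  have e4 : Vᵀ * B1 * V = 1 := by
    have key : (Vᵀ * V) * (Vᵀ * B1 * V) * (Vᵀ * V) = (Vᵀ * V) * (Vᵀ * V) := by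
      have := congrArg (fun M => Vᵀ * M * V) e3
      simp only [Matrix.mul_assoc] at this ⊢
      exact this
    have key' : (Vᵀ * V) * ((Vᵀ * B1 * V) * (Vᵀ * V)) = (Vᵀ * V) * (Vᵀ * V) := by
      simpa only [Matrix.mul_assoc] using key
    have h5 : (Vᵀ * B1 * V) * (Vᵀ * V) = (Vᵀ * V) := by
      calc (Vᵀ * B1 * V) * (Vᵀ * V)
          = W * ((Vᵀ * V) * ((Vᵀ * B1 * V) * (Vᵀ * V))) := by
            rw [← Matrix.mul_assoc W, hW, Matrix.one_mul]
        _ = W * ((Vᵀ * V) * (Vᵀ * V)) := by rw [key']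
        _ = Vᵀ * V := by rw [← Matrix.mul_assoc W, hW, Matrix.one_mul]
    calc Vᵀ * B1 * V
        = (Vᵀ * B1 * V) * ((Vᵀ * V) * W) := by
          rw [hW', Matrix.mul_one]
      _ = ((Vᵀ * B1 * V) * (Vᵀ * V)) * W := by simp only [Matrix.mul_assoc]
      _ = (Vᵀ * V) * W := by rw [h5]
      _ = 1 := hW'
  exact ⟨e1, e2, e3, e4⟩
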